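/- Let Λ be a numerical semigroup and x ∈ Λ with x = 7a_i for a minimal generator a_i, where this is the only representation of x (L_x^{(p)} = ∅ for p ≥ 2, |L_x^{(1)}| = 1). Then B(x) \ {0} = {a_i, 2a_i, 3a_i, 4a_i, 5a_i, 6a_i, 7a_i}, G_{Λ\B(x)}(Λ) has 7 vertices, and its degree sequence is (1, 2, 3, 3, 4, 5, 6). -/

import Mathlib

/-- A numerical semigroup: a cofinite additive submonoid of ℕ. -/
def IsNumericalSemigroup (Λ : Set ℕ) : Prop :=
  0 ∈ Λ ∧ (∀ a ∈ Λ, ∀ b ∈ Λ, a + b ∈ Λ) ∧ (Λᶜ).Finite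

/-- An ideal of a numerical semigroup: a nonempty subset `I ⊆ Λ` with `I + Λ ⊆ I`. -/
def IsIdeal (Λ I : Set ℕ) : Prop :=
  I.Nonempty ∧ I ⊆ Λ ∧ ∀ i ∈ I, ∀ s ∈ Λ, i + s ∈ I

/-- An irreducible ideal: one that is not the intersection of two proper ideals
each properly containing it. -/
def IsIrreducibleIdeal (Λ I : Set ℕ) : Prop :=
  IsIdeal Λ I ∧
    ¬ ∃ J K : Set ℕ, IsIdeal Λ J ∧ IsIdeal Λ K ∧ J ≠ Λ ∧ K ≠ Λ ∧
      I ⊂ J ∧ I ⊂ K ∧ I = J ∩ K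

/-- The graph `G_I(Λ)`: vertices are the nonzero elements of `Λ \ I`,
and `x ~ y` iff `x + y ∈ I`. -/
def semigroupGraph (Λ I : Set ℕ) : SimpleGraph ↥((Λ \ I) \ {0}) where
  Adj x y := (x : ℕ) ≠ (y : ℕ) ∧ (x : ℕ) + (y : ℕ) ∈ I
  symm := by
    constructor
    intro x y h
    exact ⟨fun e => h.1 e.symm, by rw [add_comm]; exact h.2⟩
  loopless := by constructor; intro x h; exact h.1 rfl

/-- `B(x) = {y ∈ Λ : x - y ∈ Λ}` (i.e. `y + z = x` for some `z ∈ Λ`). -/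
def Bset (Λ : Set ℕ) (x : ℕ) : Set ℕ :=
  {y ∈ Λ | ∃ z ∈ Λ, y + z = x}

/-- The minimal generating set of a numerical semigroup: the nonzero elements
that are not sums of two nonzero elements. -/
def MinimalGenerators (Λ : Set ℕ) : Set ℕ :=
  {a ∈ Λ | a ≠ 0 ∧ ¬ ∃ b ∈ Λ, ∃ c ∈ Λ, b ≠ 0 ∧ c ≠ 0 ∧ a = b + c}

/-- `L_x^{(p)}`: representations of `x` as a positive-integer combination of
exactly `p` distinct minimal generators of `Λ`, encoded as finitely supported
functions from generators to positive coefficients. -/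
def Lrep (Λ : Set ℕ) (x : ℕ) (p : ℕ) : Set (ℕ →₀ ℕ) :=
  {u | (↑u.support : Set ℕ) ⊆ MinimalGenerators Λ ∧ u.support.card = p ∧
    u.sum (fun a c => c * a) = x}

/-- `G` contains a subdivision of `H`: branch vertices joined by internally
disjoint paths. -/
def SimpleGraph.ContainsSubdivision {V W : Type*} (G : SimpleGraph V)
    (H : SimpleGraph W) : Prop :=
  ∃ b : W ↪ V, ∃ P : ∀ i j : W, H.Adj i j → G.Walk (b i) (b j),
    (∀ i j (h : H.Adj i j), (P i j h).IsPath) ∧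
    (∀ i j (h : H.Adj i j) (k : W), b k ∈ (P i j h).support → k = i ∨ k = j) ∧
    (∀ i j (h : H.Adj i j) (i' j' : W) (h' : H.Adj i' j'),
      ({i, j} : Set W) ≠ {i', j'} →
      ∀ v, v ∈ (P i j h).support → v ∈ (P i' j' h').support →
        v = b i ∨ v = b j)

/-- Planarity via Kuratowski's criterion: no subgraph homeomorphic to
`K₅` or `K₃,₃`. -/
def SimpleGraph.Planar {V : Type*} (G : SimpleGraph V) : Prop :=
  ¬ G.ContainsSubdivision (⊤ : SimpleGraph (Fin 5)) ∧
  ¬ G.ContainsSubdivision (completeBipartiteGraph (Fin 3) (Fin 3))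

set_option linter.unusedVariables false

lemma supp_subset_add (u v : ℕ →₀ ℕ) : u.support ⊆ (u + v).support := by
  intro a ha
  rw [Finsupp.mem_support_iff] at ha ⊢
  rw [Finsupp.add_apply]
  omega

lemma sum_add_mul (u v : ℕ →₀ ℕ) :
    (u + v).sum (fun a c => c * a) = u.sum (fun a c => c * a) + v.sum (fun a c => c * a) :=
  Finsupp.sum_add_index' (fun a => zero_mul a) (fun a b₁ b₂ => add_mul b₁ b₂ a)

lemma exists_rep (Λ : Set ℕ) (hΛ : IsNumericalSemigroup Λ) :
    ∀ y, y ∈ Λ → y ≠ 0 → ∃ u : ℕ →₀ ℕ,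
      (↑u.support : Set ℕ) ⊆ MinimalGenerators Λ ∧ u.support.Nonempty ∧
      u.sum (fun a c => c * a) = y := by
  intro y
  induction y using Nat.strong_induction_on with
  | _ y ih =>
    intro hy hy0
    by_cases hg : ∃ b ∈ Λ, ∃ c ∈ Λ, b ≠ 0 ∧ c ≠ 0 ∧ y = b + c
    · obtain ⟨b, hb, c, hc, hb0, hc0, rfl⟩ := hg
      obtain ⟨u, hus, hune, husum⟩ := ih b (by omega) hb hb0
      obtain ⟨v, hvs, hvne, hvsum⟩ := ih c (by omega) hc hc0
      refine ⟨u + v, ?_, hune.mono (supp_subset_add u v), ?_⟩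
      · intro a ha
        have : a ∈ u.support ∪ v.support := Finsupp.support_add ha
        rcases Finset.mem_union.mp this with h | h
        · exact hus h
        · exact hvs h
      · rw [sum_add_mul, husum, hvsum]
    · refine ⟨Finsupp.single y 1, ?_, ?_, ?_⟩
      · rw [Finsupp.support_single_ne_zero y one_ne_zero]
        intro a ha
        simp only [Finset.coe_singleton, Set.mem_singleton_iff] at ha
        subst ha
        exact ⟨hy, hy0, hg⟩
      · rw [Finsupp.support_single_ne_zero y one_ne_zero]; exact ⟨y, Finset.mem_singleton_self y⟩
      · rw [Finsupp.sum_single_index (zero_mul y), one_mul]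

/-- If `x = 7aᵢ` is the only representation of `x`, then
`B(x) \ {0} = {aᵢ, 2aᵢ, …, 7aᵢ}`, the graph `G_{Λ\B(x)}(Λ)` has 7 vertices,
and the degree of the vertex `k·aᵢ` is `k` for `k ≤ 3` and `k - 1` for
`4 ≤ k ≤ 7`, i.e. the degree sequence is `(1, 2, 3, 3, 4, 5, 6)`. -/
theorem Bset_of_seven_ai (Λ : Set ℕ)
    (hΛ : IsNumericalSemigroup Λ) (x ai : ℕ)
    (hai : ai ∈ MinimalGenerators Λ) (hx : x = 7 * ai)
    (hL1 : (Lrep Λ x 1).ncard = 1) (hLp : ∀ p, 2 ≤ p → Lrep Λ x p = ∅) :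
    Bset Λ x \ {0} =
      {ai, 2 * ai, 3 * ai, 4 * ai, 5 * ai, 6 * ai, 7 * ai} ∧
    ((Λ \ (Λ \ Bset Λ x)) \ {0}).ncard = 7 ∧
    (∀ k, 1 ≤ k → k ≤ 7 →
      ({z ∈ Bset Λ x \ {0} | z ≠ k * ai ∧ k * ai + z ∈ Λ \ Bset Λ x}).ncard =
        if k ≤ 3 then k else k - 1) := by
  subst hx
  obtain ⟨haiΛ, hai0, -⟩ := id hai
  have haipos : 0 < ai := Nat.pos_of_ne_zero hai0
  have hmul : ∀ k : ℕ, k * ai ∈ Λ := by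
    intro k
    induction k with
    | zero => simpa using hΛ.1
    | succ n ihn =>
      have := hΛ.2.1 _ ihn _ haiΛ
      simpa [Nat.succ_mul] using this
  have hinj : ∀ j k : ℕ, j * ai = k * ai → j = k :=
    fun j k h => Nat.eq_of_mul_eq_mul_right haipos h
  have hinjf : Function.Injective (fun j : ℕ => j * ai) := fun a b h => hinj a b h
  have hBk : ∀ k : ℕ, k ≤ 7 → k * ai ∈ Bset Λ (7 * ai) := by
    intro k hk
    refine ⟨hmul k, (7 - k) * ai, hmul _, ?_⟩
    rw [← add_mul]
    congr 1
    omega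
  have hnB : ∀ m : ℕ, 8 ≤ m → m * ai ∉ Bset Λ (7 * ai) := by
    rintro m hm ⟨-, w, -, hw⟩
    have h1 : 8 * ai ≤ m * ai := Nat.mul_le_mul_right _ hm
    have h2 : 8 * ai = 7 * ai + ai := by ring
    omega
  have hne0 : ∀ k : ℕ, 1 ≤ k → k * ai ∉ ({0} : Set ℕ) := by
    intro k hk
    simp only [Set.mem_singleton_iff]
    exact Nat.mul_ne_zero (by omega) hai0
  -- uniqueness of the representation
  have hu0 : Finsupp.single ai 7 ∈ Lrep Λ (7 * ai) 1 := by
    have hs : (Finsupp.single ai 7).support = {ai} :=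
      Finsupp.support_single_ne_zero ai (by norm_num)
    refine ⟨?_, ?_, ?_⟩
    · rw [hs]
      intro a ha
      simp only [Finset.coe_singleton, Set.mem_singleton_iff] at ha
      subst ha
      exact hai
    · rw [hs]; rfl
    · rw [Finsupp.sum_single_index (zero_mul ai)]
  have huniq : ∀ v ∈ Lrep Λ (7 * ai) 1, v = Finsupp.single ai 7 := by
    obtain ⟨w, hw⟩ := Set.ncard_eq_one.mp hL1
    intro v hv
    rw [hw, Set.mem_singleton_iff] at hv hu0
    rw [hv, hu0]
  have hkey : ∀ y ∈ Λ, y ≠ 0 → ∀ z ∈ Λ, y + z = 7 * ai →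
      ∃ c, 1 ≤ c ∧ c ≤ 7 ∧ y = c * ai := by
    intro y hy hy0 z hz hyz
    by_cases hz0 : z = 0
    · exact ⟨7, by norm_num, by norm_num, by omega⟩
    · obtain ⟨u, hus, hune, husum⟩ := exists_rep Λ hΛ y hy hy0
      obtain ⟨v, hvs, hvne, hvsum⟩ := exists_rep Λ hΛ z hz hz0
      have hss : (↑(u + v).support : Set ℕ) ⊆ MinimalGenerators Λ := by
        intro a ha
        have : a ∈ u.support ∪ v.support := Finsupp.support_add ha
        rcases Finset.mem_union.mp this with h | h
        · exact hus h
        · exact hvs h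
      have hsum : (u + v).sum (fun a c => c * a) = 7 * ai := by
        rw [sum_add_mul, husum, hvsum, hyz]
      have hmem : u + v ∈ Lrep Λ (7 * ai) (u + v).support.card := ⟨hss, rfl, hsum⟩
      have hsub : u.support ⊆ (u + v).support := supp_subset_add u v
      have hpos : 0 < (u + v).support.card :=
        Finset.card_pos.mpr (hune.mono hsub)
      have hcard1 : (u + v).support.card = 1 := by
        by_contra h
        have h2 : 2 ≤ (u + v).support.card := by omega
        rw [hLp _ h2] at hmem
        exact hmem
      rw [hcard1] at hmem
      have hs : u + v = Finsupp.single ai 7 := huniq _ hmem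
      have hsup1 : u.support ⊆ {ai} := by
        rw [hs, Finsupp.support_single_ne_zero ai (by norm_num)] at hsub
        exact hsub
      have hsupeq : u.support = {ai} := by
        obtain ⟨a, ha⟩ := hune
        have := hsup1 ha
        rw [Finset.mem_singleton] at this
        subst this
        exact Finset.Subset.antisymm hsup1 (Finset.singleton_subset_iff.mpr ha)
      have hy' : y = u ai * ai := by
        rw [← husum, Finsupp.sum, hsupeq, Finset.sum_singleton]
      have hc1 : 1 ≤ u ai := by
        have : ai ∈ u.support := by rw [hsupeq]; exact Finset.mem_singleton_self ai
        rw [Finsupp.mem_support_iff] at this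
        omega
      have hc7 : u ai ≤ 7 := by
        have h1 : u ai ≤ (u + v) ai := by rw [Finsupp.add_apply]; omega
        rw [hs, Finsupp.single_eq_same] at h1
        exact h1
      exact ⟨u ai, hc1, hc7, hy'⟩
  -- Part 1 (image form)
  have hB' : Bset Λ (7 * ai) \ {0} = (fun j : ℕ => j * ai) '' {j | 1 ≤ j ∧ j ≤ 7} := by
    ext y
    constructor
    · rintro ⟨⟨hy, z, hz, hyz⟩, hy0⟩
      have hy0' : y ≠ 0 := hy0
      obtain ⟨c, hc1, hc7, rfl⟩ := hkey y hy hy0' z hz hyz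
      exact ⟨c, ⟨hc1, hc7⟩, rfl⟩
    · rintro ⟨j, ⟨hj1, hj7⟩, rfl⟩
      exact ⟨hBk j hj7, hne0 j hj1⟩
  have hidx : {j : ℕ | 1 ≤ j ∧ j ≤ 7} = {1, 2, 3, 4, 5, 6, 7} := by
    ext j
    simp only [Set.mem_setOf_eq, Set.mem_insert_iff, Set.mem_singleton_iff]
    omega
  have hB : Bset Λ (7 * ai) \ {0} =
      {ai, 2 * ai, 3 * ai, 4 * ai, 5 * ai, 6 * ai, 7 * ai} := by
    rw [hB', hidx]
    simp [Set.image_insert_eq]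
  refine ⟨hB, ?_, ?_⟩
  · -- Part 2
    have hBsub : Bset Λ (7 * ai) ⊆ Λ := fun y hy => hy.1
    have heq2 : (Λ \ (Λ \ Bset Λ (7 * ai))) \ {0} = Bset Λ (7 * ai) \ {0} := by
      ext y
      constructor
      · rintro ⟨⟨hyΛ, hnd⟩, h0⟩
        refine ⟨?_, h0⟩
        by_contra hBc
        exact hnd ⟨hyΛ, hBc⟩
      · rintro ⟨hyB, h0⟩
        exact ⟨⟨hBsub hyB, fun h => h.2 hyB⟩, h0⟩
    rw [heq2, hB', Set.ncard_image_of_injective _ hinjf, hidx]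
    rw [show ({1, 2, 3, 4, 5, 6, 7} : Set ℕ) = (↑({1, 2, 3, 4, 5, 6, 7} : Finset ℕ) : Set ℕ)
      by simp]
    rw [Set.ncard_coe_finset]
    decide
  · -- Part 3
    intro k hk1 hk7
    have hset : {z ∈ Bset Λ (7 * ai) \ {0} | z ≠ k * ai ∧ k * ai + z ∈ Λ \ Bset Λ (7 * ai)} =
        (fun j : ℕ => j * ai) '' {j | (1 ≤ j ∧ j ≤ 7) ∧ j ≠ k ∧ 8 ≤ k + j} := by
      ext z
      constructor
      · rintro ⟨hzB, hzk, hzΛ, hznB⟩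
        rw [hB'] at hzB
        obtain ⟨j, ⟨hj1, hj7⟩, rfl⟩ := hzB
        have hjk : j ≠ k := fun h => hzk (by rw [h])
        have h8 : 8 ≤ k + j := by
          by_contra h
          have h7 : k + j ≤ 7 := by omega
          apply hznB
          rw [← add_mul]
          exact hBk _ h7
        exact ⟨j, ⟨⟨hj1, hj7⟩, hjk, h8⟩, rfl⟩
      · rintro ⟨j, ⟨⟨hj1, hj7⟩, hjk, h8⟩, rfl⟩
        refine ⟨⟨hBk j hj7, hne0 j hj1⟩, fun h => hjk (hinj j k h), ?_, ?_⟩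
        · rw [← add_mul]; exact hmul _
        · rw [← add_mul]; exact hnB _ h8
    rw [hset, Set.ncard_image_of_injective _ hinjf]
    have hfin : {j : ℕ | (1 ≤ j ∧ j ≤ 7) ∧ j ≠ k ∧ 8 ≤ k + j} =
        (↑((Finset.Icc 1 7).filter (fun j => j ≠ k ∧ 8 ≤ k + j)) : Set ℕ) := by
      ext j
      simp only [Set.mem_setOf_eq, Finset.coe_filter, Finset.mem_Icc]
      try tauto
    rw [hfin, Set.ncard_coe_finset]
    interval_cases k <;> decide
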